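/- Let 𝔤 be the Lie algebra of Komrakov example 1.1² as above with 𝔪 = span{u₁,u₂,u₃,u₄} and Lorentzian form B = diag(1,1,1,-1) on 𝔪. Then there is no X ∈ 𝔤 with X_𝔪 ≠ 0 and B(X_𝔪, X_𝔪) = 0 satisfying B(X_𝔪, [Z,X]_𝔪) = 0 for all Z ∈ 𝔤. That is, this homogeneous space has no null absolutely homogeneous geodesics. -/

import Mathlib

/-- The bracket of the Komrakov 1.1² Lie algebra on ℝ⁵ with basis
(e₁,u₁,u₂,u₃,u₄) = (coords 0,1,2,3,4). -/
def brK (x y : Fin 5 → ℝ) : Fin 5 → ℝ :=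
  ![0,
    -(x 0 * y 3 - x 3 * y 0) - (x 4 * y 1 - x 1 * y 4),
    -(x 1 * y 3 - x 3 * y 1) - 2 * (x 4 * y 2 - x 2 * y 4),
    (x 0 * y 1 - x 1 * y 0) - (x 4 * y 3 - x 3 * y 4),
    0]

/-- The Lorentzian form B = diag(1,1,1,-1) on 𝔪 = span{u₁,u₂,u₃,u₄}, applied
to the 𝔪-components (coordinates 1,…,4). -/
def BK (x y : Fin 5 → ℝ) : ℝ :=
  x 1 * y 1 + x 2 * y 2 + x 3 * y 3 - x 4 * y 4

/-- The Komrakov 1.1² homogeneous space has no null absolutely homogeneous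
geodesics: there is no X with X_𝔪 ≠ 0, B(X_𝔪,X_𝔪) = 0 and
B(X_𝔪, [Z,X]_𝔪) = 0 for all Z. -/
theorem stmt14 :
    ¬ ∃ X : Fin 5 → ℝ,
      (¬ (X 1 = 0 ∧ X 2 = 0 ∧ X 3 = 0 ∧ X 4 = 0)) ∧
      BK X X = 0 ∧
      (∀ Z : Fin 5 → ℝ, BK X (brK Z X) = 0) := by
  rintro ⟨X, hne, hnull, hZ⟩
  have h4 := hZ ![0,0,0,0,1]
  simp only [BK, brK] at h4 hnull
  simp only [Matrix.cons_val] at h4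
  norm_num [Matrix.cons_val_zero, Matrix.cons_val_one, Matrix.head_cons] at h4
  apply hne
  refine ⟨?_, ?_, ?_, ?_⟩ <;>
    nlinarith [sq_nonneg (X 1), sq_nonneg (X 2), sq_nonneg (X 3), sq_nonneg (X 4)]
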